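/- Let a₀ ∈ ℝ, let b : ℝ → ℝ be a continuous 2π-periodic function with mean b₀ = (1/2π)∫₀^{2π} b(y) dy, set c₀ = a₀ + i·b₀, and let ξ ∈ ℤ be such that e^{2πi·ξ·c₀} ≠ 1. Let g : ℝ → ℂ be a continuous 2π-periodic function. Define H̃(t, τ) = a₀·τ + i·∫_{t}^{t+τ} b(y) dy and ũ(t) = (e^{2πi·ξ·c₀} − 1)^{−1} · ∫₀^{2π} e^{i·ξ·H̃(t, τ)} · g(t + τ) dτ. Then ũ is 2π-periodic, continuously differentiable, and satisfies ũ′(t) + i·ξ·(a₀ + i·b(t))·ũ(t) = g(t) for all t ∈ ℝ; consequently ũ coincides with the function u(t) = (1 − e^{−2πi·ξ·c₀})^{−1} · ∫₀^{2π} e^{−i·ξ·(a₀τ + i∫_{t−τ}^{t} b)} · g(t − τ) dτ. -/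

import Mathlib

open Real

/-- Explicit solution formula (4.2): with `H̃(t,τ) = a₀τ + i∫_t^{t+τ} b`, the function
`ũ(t) = (e^{2πiξc₀}-1)⁻¹ ∫₀^{2π} e^{iξH̃(t,τ)} g(t+τ) dτ` is `2π`-periodic, `C¹`, solves
`ũ' + iξ(a₀ + ib(t))ũ = g`, and coincides with the solution given by formula (4.1). -/
theorem stmt_7 (a₀ : ℝ) (b : ℝ → ℝ) (hb : Continuous b)
    (hbper : ∀ t, b (t + 2 * π) = b t)
    (b₀ : ℝ) (hb₀ : b₀ = (1 / (2 * π)) * ∫ y in (0:ℝ)..(2 * π), b y)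
    (c₀ : ℂ) (hc₀ : c₀ = (a₀ : ℂ) + Complex.I * (b₀ : ℂ))
    (ξ : ℤ) (hξ : Complex.exp (((2 * π : ℝ) : ℂ) * Complex.I * (ξ : ℂ) * c₀) ≠ 1)
    (g : ℝ → ℂ) (hg : Continuous g) (hgper : ∀ t, g (t + 2 * π) = g t)
    (ut : ℝ → ℂ)
    (hut : ∀ t, ut t = (Complex.exp (((2 * π : ℝ) : ℂ) * Complex.I * (ξ : ℂ) * c₀) - 1)⁻¹ *
      ∫ τ in (0:ℝ)..(2 * π),
        Complex.exp (Complex.I * (ξ : ℂ) *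
          (((a₀ * τ : ℝ) : ℂ) + Complex.I * (((∫ y in t..(t + τ), b y) : ℝ) : ℂ))) *
        g (t + τ))
    (u : ℝ → ℂ)
    (hu : ∀ t, u t = (1 - Complex.exp (-(((2 * π : ℝ) : ℂ) * Complex.I * (ξ : ℂ) * c₀)))⁻¹ *
      ∫ τ in (0:ℝ)..(2 * π),
        Complex.exp (-(Complex.I * (ξ : ℂ) *
          (((a₀ * τ : ℝ) : ℂ) + Complex.I * (((∫ y in (t - τ)..t, b y) : ℝ) : ℂ)))) *
        g (t - τ)) :
    (∀ t, ut (t + 2 * π) = ut t) ∧ ContDiff ℝ 1 ut ∧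
    (∀ t, deriv ut t + Complex.I * (ξ : ℂ) * ((a₀ : ℂ) + Complex.I * (b t : ℂ)) * ut t = g t) ∧
    (∀ t, ut t = u t) := by
  have hπ : (0:ℝ) < 2 * π := by positivity
  set E : ℂ := Complex.exp (((2 * π : ℝ) : ℂ) * Complex.I * (ξ : ℂ) * c₀) with hEdef
  have hE1 : E - 1 ≠ 0 := sub_ne_zero.mpr hξ
  have hEne : E ≠ 0 := Complex.exp_ne_zero _
  set F : ℝ → ℝ := fun t => ∫ y in (0:ℝ)..t, b y with hFdef
  have hFd : ∀ t, HasDerivAt F (b t) t := fun t =>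
    intervalIntegral.integral_hasDerivAt_right (hb.intervalIntegrable _ _)
      (hb.stronglyMeasurableAtFilter _ _) hb.continuousAt
  have hFc : Continuous F := continuous_iff_continuousAt.mpr fun t => (hFd t).continuousAt
  have hFsub : ∀ s t : ℝ, F t - F s = ∫ y in s..t, b y := fun s t =>
    intervalIntegral.integral_interval_sub_left (hb.intervalIntegrable _ _)
      (hb.intervalIntegrable _ _)
  have hbint : (∫ y in (0:ℝ)..(2*π), b y) = 2 * π * b₀ := by
    rw [hb₀]; field_simp
  have hFper : ∀ s : ℝ, F (s + 2 * π) = F s + 2 * π * b₀ := by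
    intro s
    have h1 : F (s + 2*π) - F s = ∫ y in s..(s + 2*π), b y := hFsub s (s + 2*π)
    have h2 : (∫ y in s..(s + 2*π), b y) = ∫ y in (0:ℝ)..(0 + 2*π), b y :=
      (Function.Periodic.intervalIntegral_add_eq hbper s 0)
    rw [zero_add, hbint] at h2
    linarith [h1, h2]
  set φ : ℝ → ℂ := fun t => Complex.I * (ξ : ℂ) *
      (((a₀ * t : ℝ) : ℂ) + Complex.I * ((F t : ℝ) : ℂ)) with hφdef
  have hφd : ∀ t, HasDerivAt φ
      (Complex.I * (ξ : ℂ) * ((a₀ : ℂ) + Complex.I * ((b t : ℝ) : ℂ))) t := by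
    intro t
    have h1 : HasDerivAt (fun t : ℝ => ((a₀ * t : ℝ) : ℂ)) (a₀ : ℂ) t := by
      simpa using ((hasDerivAt_id t).const_mul a₀).ofReal_comp
    have h2 : HasDerivAt (fun t : ℝ => ((F t : ℝ) : ℂ)) ((b t : ℝ) : ℂ) t :=
      (hFd t).ofReal_comp
    exact (h1.add (h2.const_mul Complex.I)).const_mul (Complex.I * (ξ : ℂ))
  have hφc : Continuous φ := continuous_iff_continuousAt.mpr fun t => (hφd t).continuousAt
  set G : ℝ → ℂ := fun s => Complex.exp (φ s) * g s with hGdef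
  have hGc : Continuous G := (Complex.continuous_exp.comp hφc).mul hg
  have hφper : ∀ s : ℝ, φ (s + 2 * π) = φ s +
      ((2 * π : ℝ) : ℂ) * Complex.I * (ξ : ℂ) * c₀ := by
    intro s
    simp only [hφdef, hFper s, hc₀]
    push_cast
    ring
  have hGper : ∀ s : ℝ, G (s + 2 * π) = E * G s := by
    intro s
    simp only [hGdef, hφper s, hgper s, Complex.exp_add, hEdef]
    ring
  set V : ℝ → ℂ := fun t => ∫ s in t..(t + 2 * π), G s with hVdef
  have hVper : ∀ s : ℝ, V (s + 2 * π) = E * V s := by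
    intro s
    have h1 : (∫ x in s..(s + 2*π), G (x + 2*π)) =
        ∫ x in (s + 2*π)..((s + 2*π) + 2*π), G x := by
      simpa using intervalIntegral.integral_comp_add_right G (2*π)
    calc V (s + 2*π) = ∫ x in s..(s + 2*π), G (x + 2*π) := h1.symm
      _ = ∫ x in s..(s + 2*π), E * G x := by
          simp only [hGper]
      _ = E * V s := intervalIntegral.integral_const_mul _ _
  set P : ℝ → ℂ := fun t => ∫ y in (0:ℝ)..t, G y with hPdef
  have hPd : ∀ t, HasDerivAt P (G t) t := fun t =>
    intervalIntegral.integral_hasDerivAt_right (hGc.intervalIntegrable _ _)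
      (hGc.stronglyMeasurableAtFilter _ _) hGc.continuousAt
  have hVeq : ∀ t, V t = P (t + 2*π) - P t := by
    intro t
    exact (intervalIntegral.integral_interval_sub_left (hGc.intervalIntegrable _ _)
      (hGc.intervalIntegrable _ _)).symm
  have hVd : ∀ t, HasDerivAt V (G (t + 2*π) - G t) t := by
    intro t
    have h1 : HasDerivAt (fun t : ℝ => P (t + 2*π)) (G (t + 2*π)) t :=
      (hPd (t + 2*π)).comp_add_const t (2*π)
    exact (h1.sub (hPd t)).congr_of_eventuallyEq
      (Filter.Eventually.of_forall fun s => hVeq s)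
  have hVc : Continuous V := continuous_iff_continuousAt.mpr fun t => (hVd t).continuousAt
  -- key representation
  have hute : ∀ t, ut t = (E - 1)⁻¹ * (Complex.exp (-φ t) * V t) := by
    intro t
    rw [hut t]
    congr 1
    have hint : ∀ τ : ℝ, Complex.exp (Complex.I * (ξ : ℂ) *
        (((a₀ * τ : ℝ) : ℂ) + Complex.I * (((∫ y in t..(t + τ), b y) : ℝ) : ℂ))) * g (t + τ)
        = Complex.exp (-φ t) * G (t + τ) := by
      intro τ
      rw [hGdef]
      simp only [← hFsub t (t + τ)]
      rw [← mul_assoc, ← Complex.exp_add]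
      congr 2
      simp only [hφdef]
      push_cast
      ring
    rw [intervalIntegral.integral_congr (g := fun τ => Complex.exp (-φ t) * G (t + τ))
      (fun τ _ => hint τ), intervalIntegral.integral_const_mul]
    congr 1
    have := intervalIntegral.integral_comp_add_left G (a := (0:ℝ)) (b := 2*π) t
    rw [this, add_zero, hVdef]
  have hutd : ∀ t, HasDerivAt ut
      (g t - Complex.I * (ξ : ℂ) * ((a₀ : ℂ) + Complex.I * ((b t : ℝ) : ℂ)) * ut t) t := by
    intro t
    have hfun : ut = fun t => (E - 1)⁻¹ * (Complex.exp (-φ t) * V t) := funext hute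
    rw [hfun]
    have h := ((((hφd t).neg).cexp).mul (hVd t)).const_mul ((E - 1)⁻¹)
    refine h.congr_deriv ?_
    simp only [Pi.neg_apply]
    rw [hGper t]
    have hexp : Complex.exp (-φ t) * Complex.exp (φ t) = 1 := by
      rw [← Complex.exp_add]; simp
    simp only [hGdef]
    rw [Complex.exp_neg] at hexp ⊢
    field_simp
    ring
  refine ⟨?_, ?_, ?_, ?_⟩
  · intro t
    have hX : Complex.exp (-(((2 * π : ℝ) : ℂ) * Complex.I * (ξ : ℂ) * c₀)) = E⁻¹ := by
      rw [Complex.exp_neg, ← hEdef]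
    rw [hute (t + 2 * π), hute t, hφper t, hVper t, neg_add, Complex.exp_add, hX]
    field_simp
  · rw [contDiff_one_iff_deriv]
    have hdiff : Differentiable ℝ ut := fun t => (hutd t).differentiableAt
    refine ⟨hdiff, ?_⟩
    have hde : deriv ut = fun t =>
        g t - Complex.I * (ξ : ℂ) * ((a₀ : ℂ) + Complex.I * ((b t : ℝ) : ℂ)) * ut t :=
      funext fun t => (hutd t).deriv
    rw [hde]
    have hutc : Continuous ut := hdiff.continuous
    fun_prop
  · intro t
    rw [(hutd t).deriv]
    ring
  · intro t
    rw [hu t, hute t]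
    have hint : ∀ τ : ℝ, Complex.exp (-(Complex.I * (ξ : ℂ) *
        (((a₀ * τ : ℝ) : ℂ) + Complex.I * (((∫ y in (t - τ)..t, b y) : ℝ) : ℂ)))) * g (t - τ)
        = Complex.exp (-φ t) * G (t - τ) := by
      intro τ
      simp only [hGdef, ← hFsub (t - τ) t]
      rw [← mul_assoc, ← Complex.exp_add]
      congr 2
      simp only [hφdef]
      push_cast
      ring
    rw [intervalIntegral.integral_congr (g := fun τ => Complex.exp (-φ t) * G (t - τ))
      (fun τ _ => hint τ), intervalIntegral.integral_const_mul]
    have hsub : (∫ τ in (0:ℝ)..(2 * π), G (t - τ)) = ∫ x in (t - 2 * π)..(t - 0), G x :=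
      intervalIntegral.integral_comp_sub_left G t
    have hV2 : (∫ x in (t - 2 * π)..(t - 0), G x) = E⁻¹ * V t := by
      have h1 : V (t - 2 * π + 2 * π) = E * V (t - 2 * π) := hVper (t - 2 * π)
      rw [sub_add_cancel] at h1
      have h2 : V (t - 2 * π) = ∫ x in (t - 2 * π)..(t - 2 * π + 2 * π), G x := rfl
      rw [sub_add_cancel] at h2
      rw [sub_zero, ← h2, h1]
      field_simp
    have hX : Complex.exp (-(((2 * π : ℝ) : ℂ) * Complex.I * (ξ : ℂ) * c₀)) = E⁻¹ := by
      rw [Complex.exp_neg, ← hEdef]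
    rw [hsub, hV2, hX]
    have h3 : (1 : ℂ) - E⁻¹ = (E - 1) * E⁻¹ := by
      field_simp
    rw [h3, mul_inv, inv_inv]
    field_simp
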